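/- Let K be a field of characteristic p > 0, and let a, b ∈ K with a ≠ 0. Then the Galois group of the splitting field of the polynomial T^p + a·T − b over K is a solvable group. -/

import Mathlib

open Polynomial

/-- Over a field `K` of prime characteristic `p`, the Galois group of the polynomial
`T^p + a T - b` (with `a ≠ 0`) is solvable. -/
theorem galois_group_of_artin_schreier_like_solvable
    {K : Type*} [Field K] (p : ℕ) [Fact p.Prime] [CharP K p]
    (a b : K) (ha : a ≠ 0) :
    IsSolvable ((X ^ p + C a * X - C b : K[X]).Gal) := by
  have hp : p.Prime := Fact.out
  set f : K[X] := X ^ p + C a * X - C b with hf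
  have h1 : (C a * X - C b : K[X]).degree < (X ^ p : K[X]).degree := by
    rw [degree_X_pow]
    refine lt_of_le_of_lt (degree_sub_le _ _) ?_
    simp only [max_lt_iff]
    constructor
    · calc (C a * X : K[X]).degree ≤ 1 := by simpa using degree_C_mul_X_le a
        _ < (p:ℕ) := by exact_mod_cast Nat.one_lt_cast.mpr hp.one_lt
    · exact lt_of_le_of_lt (degree_C_le) (by exact_mod_cast Nat.cast_pos.mpr hp.pos)
  have hdeg : f.natDegree = p := by
    rw [hf, add_sub_assoc, natDegree_add_eq_left_of_degree_lt h1, natDegree_X_pow]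
  have hsep : f.Separable := by
    have hd : derivative f = C a := by
      simp [hf, derivative_X_pow, CharP.cast_eq_zero K p]
    rw [Polynomial.separable_def, hd]
    exact ⟨0, C a⁻¹, by rw [zero_mul, zero_add, ← C_mul, inv_mul_cancel₀ ha, C_1]⟩
  have hf0 : f ≠ 0 := fun h => hp.ne_zero (by rw [← hdeg, h, natDegree_zero])
  set L := f.SplittingField with hL
  haveI : CharP L p := charP_of_injective_algebraMap (algebraMap K L).injective p
  set A : L := algebraMap K L a with hA
  set B : L := algebraMap K L b with hB
  -- root characterization
  have hroot : ∀ x : L, x ∈ f.rootSet L ↔ x ^ p + A * x - B = 0 := by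
    intro x
    have hval : aeval x f = x ^ p + A * x - B := by
      simp [hf, hA, hB]
    rw [mem_rootSet_of_ne hf0, hval]
  have hcard : Fintype.card (f.rootSet L) = p := by
    rw [card_rootSet_eq_natDegree hsep (SplittingField.splits f), hdeg]
  obtain ⟨⟨α, hα⟩, ⟨β, hβ⟩, hne⟩ :=
    Fintype.exists_pair_of_one_lt_card (by rw [hcard]; exact hp.one_lt)
  set c : L := β - α with hc
  have hc0 : c ≠ 0 := sub_ne_zero.mpr fun h => hne (by simp [Subtype.ext_iff, h.symm])
  -- difference of roots satisfies v^p + A v = 0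
  have hG : ∀ x ∈ f.rootSet L, ∀ y ∈ f.rootSet L, (y - x) ^ p + A * (y - x) = 0 := by
    intro x hx y hy
    have hx' := (hroot x).mp hx
    have hy' := (hroot y).mp hy
    rw [sub_pow_char y x]
    linear_combination hy' - hx'
  have hcG : c ^ p + A * c = 0 := hG α hα β hβ
  -- nat multiples of g-roots are g-roots
  have hnat : ∀ (i : ℕ) (v : L), v ^ p + A * v = 0 → ((i : L) * v) ^ p + A * ((i : L) * v) = 0 := by
    intro i v hv
    have hip : (i : L) ^ p = (i : L) := by
      have := map_natCast (frobenius L p) i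
      rwa [frobenius_def] at this
    rw [mul_pow, hip]
    linear_combination (i : L) * hv
  -- root + g-root is a root
  have htrans : ∀ x ∈ f.rootSet L, ∀ v : L, v ^ p + A * v = 0 → (x + v) ∈ f.rootSet L := by
    intro x hx v hv
    rw [hroot] at hx ⊢
    rw [add_pow_char x v]
    linear_combination hx + hv
  -- every root has the form α + i c
  have hform : ∀ x ∈ f.rootSet L, ∃ i : ℕ, x = α + (i : L) * c := by
    have hinj : Function.Injective (fun i : Fin p =>
        (⟨α + (i : ℕ) * c, htrans α hα _ (hnat i c hcG)⟩ : f.rootSet L)) := by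
      intro i j hij
      simp only [Subtype.mk_eq_mk, add_right_cancel_iff] at hij
      have : (i : L) = (j : L) := by
        exact mul_right_cancel₀ hc0 (add_left_cancel hij)
      have := (CharP.natCast_eq_natCast L p).mp this
      exact Fin.ext ((Nat.ModEq.eq_of_lt_of_lt this i.2 j.2))
    have hsurj : Function.Surjective (fun i : Fin p =>
        (⟨α + (i : ℕ) * c, htrans α hα _ (hnat i c hcG)⟩ : f.rootSet L)) := by
      exact ((Fintype.bijective_iff_injective_and_card _).mpr
        ⟨hinj, by simp [hcard]⟩).surjective
    intro x hx
    obtain ⟨i, hi⟩ := hsurj ⟨x, hx⟩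
    exact ⟨i, by simpa [Subtype.ext_iff] using hi.symm⟩
  -- every g-root is a natural multiple of c
  have hgform : ∀ v : L, v ^ p + A * v = 0 → ∃ i : ℕ, v = (i : L) * c := by
    intro v hv
    obtain ⟨i, hi⟩ := hform (α + v) (htrans α hα v hv)
    exact ⟨i, add_left_cancel hi⟩
  have hσA : ∀ σ : f.Gal, σ A = A := fun σ => σ.commutes a
  have hσg : ∀ (σ : f.Gal) (v : L), v ^ p + A * v = 0 → (σ v) ^ p + A * (σ v) = 0 := by
    intro σ v hv
    have := congrArg σ hv
    simpa [map_add, map_mul, map_pow, hσA σ] using this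
  have hσc0 : ∀ σ : f.Gal, σ c ≠ 0 := fun σ h =>
    hc0 (by simpa using σ.injective (h.trans (map_zero σ.toAlgHom).symm))
  have hσc : ∀ σ : f.Gal, ∃ i : ℕ, σ c = (i : L) * c := fun σ => hgform _ (hσg σ c hcG)
  -- the multiplicative character
  let χ : f.Gal →* Lˣ := MonoidHom.mk'
    (fun σ => Units.mk0 (σ c / c) (div_ne_zero (hσc0 σ) hc0)) (by
      intro σ τ
      obtain ⟨i, hi⟩ := hσc τ
      rw [Units.ext_iff]
      simp only [Units.val_mul, Units.val_mk0]
      rw [show (σ * τ) c = σ (τ c) from rfl, hi, map_mul, map_natCast]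
      field_simp)
  have hker : ∀ σ : f.Gal, σ ∈ χ.ker ↔ σ c = c := by
    intro σ
    rw [MonoidHom.mem_ker, Units.ext_iff]
    show σ c / c = 1 ↔ _
    rw [div_eq_one_iff_eq hc0]
  -- Galois preserves roots
  have hσα : ∀ σ : f.Gal, σ α ∈ f.rootSet L := by
    intro σ
    rw [hroot]
    have hα' := (hroot α).mp hα
    have := congrArg σ hα'
    simpa [map_add, map_sub, map_mul, map_pow, hσA σ, show σ B = B from σ.commutes b] using this
  -- the additive character on the kernel
  let δ : χ.ker →* Multiplicative L := MonoidHom.mk'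
    (fun σ => Multiplicative.ofAdd ((σ : f.Gal) α - α)) (by
      intro σ τ
      obtain ⟨i, hi⟩ := hform ((τ : f.Gal) α) (hσα τ)
      have hsc : (σ : f.Gal) c = c := (hker _).mp σ.2
      show Multiplicative.ofAdd (((σ * τ : χ.ker) : f.Gal) α - α) = _
      rw [← ofAdd_add]
      congr 1
      have hmul : ((σ * τ : χ.ker) : f.Gal) α = (σ : f.Gal) ((τ : f.Gal) α) := rfl
      rw [hmul, hi, map_add, map_mul, map_natCast, hsc]
      ring)
  have hδ : Function.Injective δ := by
    rw [injective_iff_map_eq_one]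
    intro σ hσ
    have hα' : (σ : f.Gal) α = α := by
      have h2 : Multiplicative.ofAdd ((σ : f.Gal) α - α) = Multiplicative.ofAdd 0 := hσ
      have := Multiplicative.ofAdd.injective h2
      rwa [sub_eq_zero] at this
    have hsc : (σ : f.Gal) c = c := (hker _).mp σ.2
    apply Subtype.ext
    apply Polynomial.Gal.ext
    intro x hx
    obtain ⟨i, hi⟩ := hform x hx
    rw [hi, map_add, map_mul, map_natCast, hα', hsc]
    rfl
  haveI : IsSolvable χ.ker := solvable_of_solvable_injective hδ
  exact solvable_of_ker_le_range χ.ker.subtype χ (Subgroup.range_subtype _).ge (hG' := this)
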